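/- Let S and R be symmetric positive definite m×m real matrices. Then for every vector x ∈ ℝ^m, xᵀ (S^{−1/2} (S^{1/2} R^{−1} S^{1/2})^{1/2} S^{−1/2}) x ≤ (xᵀ S^{−1} x)^{1/2} · (xᵀ R^{−1} x)^{1/2}. -/

import Mathlib

open Matrix Real
open scoped Classical

/-- The unique symmetric positive semidefinite square root of a positive semidefinite
matrix (junk value `0` if the matrix is not positive semidefinite). -/
noncomputable def psqrt {m : ℕ} (M : Matrix (Fin m) (Fin m) ℝ) : Matrix (Fin m) (Fin m) ℝ :=
  if h : M.PosSemidef then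
    h.1.eigenvectorUnitary.1 * diagonal ((↑) ∘ (√·) ∘ h.1.eigenvalues) *
      (star h.1.eigenvectorUnitary : Matrix (Fin m) (Fin m) ℝ)
  else 0

lemma psqrt_spec {m : ℕ} (M : Matrix (Fin m) (Fin m) ℝ) (h : M.PosSemidef) :
    (psqrt M).PosSemidef ∧ psqrt M * psqrt M = M := by
  unfold psqrt
  rw [dif_pos h]
  constructor
  · have := (posSemidef_diagonal_iff.mpr (fun i => Real.sqrt_nonneg (h.1.eigenvalues i))).mul_mul_conjTranspose_same
      (h.1.eigenvectorUnitary : Matrix (Fin m) (Fin m) ℝ)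
    simpa [Unitary.coe_star, Matrix.star_eq_conjTranspose, Function.comp_def] using this
  · conv_rhs => rw [h.1.spectral_theorem, Unitary.conjStarAlgAut_apply]
    have hU : (star h.1.eigenvectorUnitary : Matrix (Fin m) (Fin m) ℝ) * h.1.eigenvectorUnitary.1 = 1 :=
      Unitary.coe_star_mul_self _
    have hD : diagonal (((↑) : ℝ → ℝ) ∘ (√·) ∘ h.1.eigenvalues) *
        diagonal (((↑) : ℝ → ℝ) ∘ (√·) ∘ h.1.eigenvalues) = diagonal (RCLike.ofReal ∘ h.1.eigenvalues) := by
      rw [diagonal_mul_diagonal]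
      congr 1
      funext i
      simp [Real.mul_self_sqrt (h.eigenvalues_nonneg i)]
    calc _ = h.1.eigenvectorUnitary.1 * (diagonal ((↑) ∘ (√·) ∘ h.1.eigenvalues) *
          ((star h.1.eigenvectorUnitary : Matrix (Fin m) (Fin m) ℝ) * h.1.eigenvectorUnitary.1) *
          diagonal ((↑) ∘ (√·) ∘ h.1.eigenvalues)) *
          (star h.1.eigenvectorUnitary : Matrix (Fin m) (Fin m) ℝ) := by
          simp only [Matrix.mul_assoc]
      _ = _ := by rw [hU, Matrix.mul_one, hD]

/-- The geometric mean `S # R = S^{1/2} (S^{-1/2} R S^{-1/2})^{1/2} S^{1/2}` of two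
positive definite matrices: the midpoint of the geodesic joining them in the
affine-invariant Riemannian metric. -/
noncomputable def geoMean {m : ℕ} (S R : Matrix (Fin m) (Fin m) ℝ) :
    Matrix (Fin m) (Fin m) ℝ :=
  psqrt S * psqrt ((psqrt S)⁻¹ * R * (psqrt S)⁻¹) * psqrt S

/-- Cauchy–Schwarz for the real dot product. -/
lemma cs_dot {m : ℕ} (y z : Fin m → ℝ) :
    y ⬝ᵥ z ≤ Real.sqrt (y ⬝ᵥ y) * Real.sqrt (z ⬝ᵥ z) := by
  have h := Finset.sum_mul_sq_le_sq_mul_sq Finset.univ y z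
  calc y ⬝ᵥ z ≤ |y ⬝ᵥ z| := le_abs_self _
    _ = Real.sqrt ((y ⬝ᵥ z) ^ 2) := (Real.sqrt_sq_eq_abs _).symm
    _ ≤ Real.sqrt ((y ⬝ᵥ y) * (z ⬝ᵥ z)) := by
        apply Real.sqrt_le_sqrt
        simpa [dotProduct, pow_two] using h
    _ = _ := Real.sqrt_mul (Finset.sum_nonneg fun i _ => mul_self_nonneg (y i)) _

/-- Moving a symmetric matrix across the dot product. -/
lemma symm_dot {m : ℕ} {M : Matrix (Fin m) (Fin m) ℝ} (hM : Mᵀ = M) (v w : Fin m → ℝ) :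
    v ⬝ᵥ (M *ᵥ w) = (M *ᵥ v) ⬝ᵥ w := by
  rw [Matrix.dotProduct_mulVec, ← Matrix.vecMul_transpose, hM]

/-- for positive definite `S, R` and any vector `x`,
`xᵀ (S^{-1/2} (S^{1/2} R^{-1} S^{1/2})^{1/2} S^{-1/2}) x ≤ (xᵀ S⁻¹ x)^{1/2} (xᵀ R⁻¹ x)^{1/2}`. -/
theorem geometric_mean_quadratic_form_bound {m : ℕ}
    (S R : Matrix (Fin m) (Fin m) ℝ) (hS : S.PosDef) (hR : R.PosDef)
    (x : Fin m → ℝ) :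
    x ⬝ᵥ (((psqrt S)⁻¹ * psqrt (psqrt S * R⁻¹ * psqrt S) * (psqrt S)⁻¹) *ᵥ x)
      ≤ Real.sqrt (x ⬝ᵥ (S⁻¹ *ᵥ x)) * Real.sqrt (x ⬝ᵥ (R⁻¹ *ᵥ x)) := by
  have hSsd := hS.posSemidef
  set P := psqrt S with hPd
  have hPsd : P.PosSemidef := (psqrt_spec S hSsd).1
  have hPP : P * P = S := (psqrt_spec S hSsd).2
  have hPsym : Pᵀ = P := (by simpa using hPsd.1 : P.IsSymm)
  have hPunit : IsUnit P.det := by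
    have h1 : P * (P * S⁻¹) = 1 := by
      rw [← mul_assoc, hPP, Matrix.mul_nonsing_inv _ hS.det_pos.ne'.isUnit]
    exact IsUnit.of_mul_eq_one (P * S⁻¹).det (by rw [← Matrix.det_mul, h1, Matrix.det_one])
  have hPisym : (P⁻¹)ᵀ = P⁻¹ := by rw [Matrix.transpose_nonsing_inv, hPsym]
  -- the matrix A = P R⁻¹ P
  have hAsd : (P * R⁻¹ * P).PosSemidef := by
    have := (hR.inv.posSemidef).mul_mul_conjTranspose_same P
    simpa [hPsym] using this
  set B := psqrt (P * R⁻¹ * P) with hBd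
  have hBsd : B.PosSemidef := (psqrt_spec _ hAsd).1
  have hBB : B * B = P * R⁻¹ * P := (psqrt_spec _ hAsd).2
  have hBsym : Bᵀ = B := (by simpa using hBsd.1 : B.IsSymm)
  set y := P⁻¹ *ᵥ x with hy
  -- LHS = y ⬝ᵥ B y
  have h1 : x ⬝ᵥ ((P⁻¹ * B * P⁻¹) *ᵥ x) = y ⬝ᵥ (B *ᵥ y) := by
    rw [← Matrix.mulVec_mulVec, ← Matrix.mulVec_mulVec, symm_dot hPisym, Matrix.mulVec_mulVec]
  -- x ⬝ᵥ S⁻¹ x = y ⬝ᵥ y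
  have h2 : x ⬝ᵥ (S⁻¹ *ᵥ x) = y ⬝ᵥ y := by
    rw [← hPP, Matrix.mul_inv_rev, ← Matrix.mulVec_mulVec, symm_dot hPisym]
  -- x ⬝ᵥ R⁻¹ x = y ⬝ᵥ A y = (B y) ⬝ᵥ (B y)
  have hPy : P *ᵥ y = x := by
    rw [hy, Matrix.mulVec_mulVec, Matrix.mul_nonsing_inv _ hPunit, Matrix.one_mulVec]
  have h3 : x ⬝ᵥ (R⁻¹ *ᵥ x) = (B *ᵥ y) ⬝ᵥ (B *ᵥ y) := by
    have : (B *ᵥ y) ⬝ᵥ (B *ᵥ y) = y ⬝ᵥ ((B * B) *ᵥ y) := by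
      rw [← Matrix.mulVec_mulVec, symm_dot hBsym, dotProduct_comm, symm_dot hBsym]
    rw [this, hBB, ← Matrix.mulVec_mulVec, ← Matrix.mulVec_mulVec, symm_dot hPsym, hPy]
  rw [h1, h2, h3]
  exact cs_dot y (B *ᵥ y)
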